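/- Let S be the (N−1)×N forward difference matrix and T the M×(M−1) difference matrix. The maximum eigenvalue of the Hessian matrix H = (1/τ)Bᵀ B, where B = [[I_M ⊗ S, −I, 0], [Tᵀ ⊗ I_N, 0, −I]], is at most 12/τ. -/

import Mathlib

open Matrix Kronecker

/-- Forward difference matrix `S ∈ ℝ^{N×(N+1)}` with `S i i = -1`, `S i (i+1) = 1`. -/
def Smat (N : ℕ) : Matrix (Fin N) (Fin (N + 1)) ℝ :=
  fun i j => if j = i.castSucc then -1 else if j = i.succ then 1 else 0

/-- Difference matrix `T ∈ ℝ^{(M+1)×M}` with `T (j+1) j = 1`, `T j j = -1`. -/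
def Tmat (M : ℕ) : Matrix (Fin (M + 1)) (Fin M) ℝ :=
  fun i j => if i = j.succ then 1 else if i = j.castSucc then -1 else 0

/-- The block matrix `B = [[I_M ⊗ S, −I, 0], [Tᵀ ⊗ I_N, 0, −I]]`. -/
def Bmat (N M : ℕ) :
    Matrix ((Fin (M + 1) × Fin N) ⊕ (Fin M × Fin (N + 1)))
      ((Fin (M + 1) × Fin (N + 1)) ⊕ ((Fin (M + 1) × Fin N) ⊕ (Fin M × Fin (N + 1)))) ℝ :=
  fun row col =>
    match row, col with
    | Sum.inl b, Sum.inl a => ((1 : Matrix (Fin (M + 1)) (Fin (M + 1)) ℝ) ⊗ₖ Smat N) b a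
    | Sum.inl b, Sum.inr (Sum.inl b') => if b = b' then -1 else 0
    | Sum.inl _, Sum.inr (Sum.inr _) => 0
    | Sum.inr g, Sum.inl a => ((Tmat M)ᵀ ⊗ₖ (1 : Matrix (Fin (N + 1)) (Fin (N + 1)) ℝ)) g a
    | Sum.inr _, Sum.inr (Sum.inl _) => 0
    | Sum.inr g, Sum.inr (Sum.inr g') => if g = g' then -1 else 0

lemma sum_S (N : ℕ) (i : Fin N) (f : Fin (N+1) → ℝ) :
    ∑ j, Smat N i j * f j = f i.succ - f i.castSucc := by
  have hne : (i.succ : Fin (N+1)) ≠ i.castSucc := (Fin.castSucc_lt_succ (i := i)).ne'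
  have h : ∀ j, Smat N i j * f j =
      (if i.succ = j then f j else 0) - (if i.castSucc = j then f j else 0) := by
    intro j
    simp only [Smat]
    rcases eq_or_ne j i.castSucc with h1 | h1
    · subst h1
      rw [if_pos rfl, if_neg hne, if_pos rfl]; ring
    · rcases eq_or_ne j i.succ with h2 | h2
      · subst h2
        rw [if_neg (fun e => h1 e), if_pos rfl, if_pos rfl, if_neg (Ne.symm h1)]; ring
      · rw [if_neg h1, if_neg h2, if_neg (Ne.symm h2), if_neg (Ne.symm h1)]; ring
  simp only [h, Finset.sum_sub_distrib, Finset.sum_ite_eq, Finset.mem_univ, if_true]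

lemma sum_T (M : ℕ) (g : Fin M) (f : Fin (M+1) → ℝ) :
    ∑ b, Tmat M b g * f b = f g.succ - f g.castSucc := by
  have hne : (g.succ : Fin (M+1)) ≠ g.castSucc := (Fin.castSucc_lt_succ (i := g)).ne'
  have h : ∀ b, Tmat M b g * f b =
      (if g.succ = b then f b else 0) - (if g.castSucc = b then f b else 0) := by
    intro b
    simp only [Tmat]
    rcases eq_or_ne b g.succ with h1 | h1
    · subst h1
      rw [if_pos rfl, if_pos rfl, if_neg (Ne.symm (Ne.symm hne).symm)]; ring
    · rcases eq_or_ne b g.castSucc with h2 | h2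
      · subst h2
        rw [if_neg h1, if_pos rfl, if_neg (Ne.symm h1), if_pos rfl]; ring
      · rw [if_neg h1, if_neg h2, if_neg (Ne.symm h1), if_neg (Ne.symm h2)]; ring
  simp only [h, Finset.sum_sub_distrib, Finset.sum_ite_eq, Finset.mem_univ, if_true]

lemma mulVec_inl (N M : ℕ)
    (v : (Fin (M + 1) × Fin (N + 1)) ⊕ ((Fin (M + 1) × Fin N) ⊕ (Fin M × Fin (N + 1))) → ℝ)
    (b : Fin (M+1)) (i : Fin N) :
    (Bmat N M).mulVec v (Sum.inl (b, i)) =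
      v (Sum.inl (b, i.succ)) - v (Sum.inl (b, i.castSucc)) - v (Sum.inr (Sum.inl (b, i))) := by
  simp only [Matrix.mulVec, dotProduct, Fintype.sum_sum_type, Fintype.sum_prod_type, Bmat,
    Matrix.kroneckerMap_apply, Matrix.one_apply, ite_mul, one_mul, zero_mul, mul_zero,
    Finset.sum_ite_irrel,
    Finset.sum_ite_eq, Finset.mem_univ, if_true, Finset.sum_const_zero, add_zero]
  rw [sum_S N i (fun j => v (Sum.inl (b, j)))]
  ring

lemma mulVec_inr (N M : ℕ)
    (v : (Fin (M + 1) × Fin (N + 1)) ⊕ ((Fin (M + 1) × Fin N) ⊕ (Fin M × Fin (N + 1))) → ℝ)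
    (g : Fin M) (i : Fin (N+1)) :
    (Bmat N M).mulVec v (Sum.inr (g, i)) =
      v (Sum.inl (g.succ, i)) - v (Sum.inl (g.castSucc, i)) - v (Sum.inr (Sum.inr (g, i))) := by
  simp only [Matrix.mulVec, dotProduct, Fintype.sum_sum_type, Fintype.sum_prod_type, Bmat,
    Matrix.kroneckerMap_apply, Matrix.one_apply, Matrix.transpose_apply, mul_ite, ite_mul,
    one_mul, zero_mul, mul_zero, mul_one, Finset.sum_ite_irrel,
    Finset.sum_ite_eq, Finset.mem_univ, if_true, Finset.sum_const_zero, add_zero, zero_add]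
  rw [sum_T M g (fun b => v (Sum.inl (b, i)))]
  ring

lemma sum_comp_le {α β : Type*} [Fintype α] [Fintype β] [DecidableEq β] (e : α → β)
    (he : Function.Injective e) (g : β → ℝ) (hg : ∀ b, 0 ≤ g b) :
    ∑ a, g (e a) ≤ ∑ b, g b := by
  rw [← Finset.sum_image (f := g) (fun a _ b _ h => he h)]
  exact Finset.sum_le_sum_of_subset_of_nonneg (Finset.subset_univ _) (fun b _ _ => hg b)

lemma B_norm_bound (N M : ℕ)
    (v : (Fin (M + 1) × Fin (N + 1)) ⊕ ((Fin (M + 1) × Fin N) ⊕ (Fin M × Fin (N + 1))) → ℝ) :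
    ∑ r, ((Bmat N M).mulVec v r) ^ 2 ≤ 12 * ∑ c, (v c) ^ 2 := by
  set w := (Bmat N M).mulVec v with hw
  rw [Fintype.sum_sum_type]
  set A := ∑ a : Fin (M+1) × Fin (N+1), (v (Sum.inl a))^2 with hA
  set C := ∑ b : Fin (M+1) × Fin N, (v (Sum.inr (Sum.inl b)))^2 with hC
  set D := ∑ g : Fin M × Fin (N+1), (v (Sum.inr (Sum.inr g)))^2 with hD
  have hAnn : ∀ a : Fin (M+1) × Fin (N+1), (0:ℝ) ≤ (v (Sum.inl a))^2 := fun a => sq_nonneg _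
  have hL : ∑ p : Fin (M+1) × Fin N, (w (Sum.inl p))^2 ≤
      ∑ p : Fin (M+1) × Fin N, (3:ℝ) * ((v (Sum.inl (p.1, p.2.succ)))^2 +
        (v (Sum.inl (p.1, p.2.castSucc)))^2 + (v (Sum.inr (Sum.inl p)))^2) := by
    refine Finset.sum_le_sum (fun p _ => ?_)
    obtain ⟨b, i⟩ := p
    rw [hw, mulVec_inl]
    nlinarith [sq_nonneg (v (Sum.inl (b, i.succ)) + v (Sum.inl (b, i.castSucc))),
      sq_nonneg (v (Sum.inl (b, i.succ)) + v (Sum.inr (Sum.inl (b, i)))),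
      sq_nonneg (v (Sum.inl (b, i.castSucc)) + v (Sum.inr (Sum.inl (b, i))))]
  have hR : ∑ p : Fin M × Fin (N+1), (w (Sum.inr p))^2 ≤
      ∑ p : Fin M × Fin (N+1), (3:ℝ) * ((v (Sum.inl (p.1.succ, p.2)))^2 +
        (v (Sum.inl (p.1.castSucc, p.2)))^2 + (v (Sum.inr (Sum.inr p)))^2) := by
    refine Finset.sum_le_sum (fun p _ => ?_)
    obtain ⟨g, i⟩ := p
    rw [hw, mulVec_inr]
    nlinarith [sq_nonneg (v (Sum.inl (g.succ, i)) + v (Sum.inl (g.castSucc, i))),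
      sq_nonneg (v (Sum.inl (g.succ, i)) + v (Sum.inr (Sum.inr (g, i)))),
      sq_nonneg (v (Sum.inl (g.castSucc, i)) + v (Sum.inr (Sum.inr (g, i))))]
  have h1 : ∑ p : Fin (M+1) × Fin N, (v (Sum.inl (p.1, p.2.succ)))^2 ≤ A := by
    rw [hA]
    exact sum_comp_le (fun p : Fin (M+1) × Fin N => ((p.1, p.2.succ) : Fin (M+1) × Fin (N+1)))
      (fun p q h => by
        rw [Prod.mk.injEq] at h
        exact Prod.ext h.1 (Fin.succ_injective _ h.2))
      (fun a => (v (Sum.inl a))^2) hAnn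
  have h2 : ∑ p : Fin (M+1) × Fin N, (v (Sum.inl (p.1, p.2.castSucc)))^2 ≤ A := by
    rw [hA]
    exact sum_comp_le (fun p : Fin (M+1) × Fin N => ((p.1, p.2.castSucc) : Fin (M+1) × Fin (N+1)))
      (fun p q h => by
        rw [Prod.mk.injEq] at h
        exact Prod.ext h.1 (Fin.castSucc_injective _ h.2))
      (fun a => (v (Sum.inl a))^2) hAnn
  have h3 : ∑ p : Fin M × Fin (N+1), (v (Sum.inl (p.1.succ, p.2)))^2 ≤ A := by
    rw [hA]
    exact sum_comp_le (fun p : Fin M × Fin (N+1) => ((p.1.succ, p.2) : Fin (M+1) × Fin (N+1)))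
      (fun p q h => by
        rw [Prod.mk.injEq] at h
        exact Prod.ext (Fin.succ_injective _ h.1) h.2)
      (fun a => (v (Sum.inl a))^2) hAnn
  have h4 : ∑ p : Fin M × Fin (N+1), (v (Sum.inl (p.1.castSucc, p.2)))^2 ≤ A := by
    rw [hA]
    exact sum_comp_le (fun p : Fin M × Fin (N+1) => ((p.1.castSucc, p.2) : Fin (M+1) × Fin (N+1)))
      (fun p q h => by
        rw [Prod.mk.injEq] at h
        exact Prod.ext (Fin.castSucc_injective _ h.1) h.2)
      (fun a => (v (Sum.inl a))^2) hAnn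
  have hCnn : (0:ℝ) ≤ C := Finset.sum_nonneg (fun _ _ => sq_nonneg _)
  have hDnn : (0:ℝ) ≤ D := Finset.sum_nonneg (fun _ _ => sq_nonneg _)
  have htot : ∑ c, (v c)^2 = A + (C + D) := by
    rw [Fintype.sum_sum_type, Fintype.sum_sum_type]
  rw [htot]
  have eL : ∑ p : Fin (M+1) × Fin N, (3:ℝ) * ((v (Sum.inl (p.1, p.2.succ)))^2 +
        (v (Sum.inl (p.1, p.2.castSucc)))^2 + (v (Sum.inr (Sum.inl p)))^2) =
      3 * (∑ p : Fin (M+1) × Fin N, (v (Sum.inl (p.1, p.2.succ)))^2)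
        + 3 * (∑ p : Fin (M+1) × Fin N, (v (Sum.inl (p.1, p.2.castSucc)))^2) + 3 * C := by
    rw [hC]
    simp only [mul_add, Finset.sum_add_distrib, Finset.mul_sum]
  have eR : ∑ p : Fin M × Fin (N+1), (3:ℝ) * ((v (Sum.inl (p.1.succ, p.2)))^2 +
        (v (Sum.inl (p.1.castSucc, p.2)))^2 + (v (Sum.inr (Sum.inr p)))^2) =
      3 * (∑ p : Fin M × Fin (N+1), (v (Sum.inl (p.1.succ, p.2)))^2)
        + 3 * (∑ p : Fin M × Fin (N+1), (v (Sum.inl (p.1.castSucc, p.2)))^2) + 3 * D := by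
    rw [hD]
    simp only [mul_add, Finset.sum_add_distrib, Finset.mul_sum]
  rw [eL] at hL
  rw [eR] at hR
  linarith

/-- Every eigenvalue of the Hessian `H = (1/τ) Bᵀ B` is at most `12/τ`. -/
theorem eigenvalue_hessian_le (N M : ℕ) (hN : 1 ≤ N) (hM : 1 ≤ M) (τ : ℝ) (hτ : 0 < τ)
    (μ : ℝ)
    (v : (Fin (M + 1) × Fin (N + 1)) ⊕ ((Fin (M + 1) × Fin N) ⊕ (Fin M × Fin (N + 1))) → ℝ)
    (hv : v ≠ 0)
    (hμ : ((1 / τ) • ((Bmat N M)ᵀ * Bmat N M)).mulVec v = μ • v) :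
    μ ≤ 12 / τ := by
  have hdot := congrArg (fun w => v ⬝ᵥ w) hμ
  simp only [Matrix.smul_mulVec, dotProduct_smul, smul_eq_mul, one_div] at hdot
  rw [← Matrix.mulVec_mulVec, Matrix.dotProduct_mulVec, Matrix.vecMul_transpose] at hdot
  set w := (Bmat N M).mulVec v with hwdef
  have hQ : w ⬝ᵥ w = ∑ r, (w r)^2 := by simp [dotProduct, sq]
  have hP : v ⬝ᵥ v = ∑ c, (v c)^2 := by simp [dotProduct, sq]
  rw [hQ, hP] at hdot
  set P := ∑ c, (v c)^2 with hPdef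
  set Q := ∑ r, (w r)^2 with hQdef
  have hbound : Q ≤ 12 * P := B_norm_bound N M v
  have hPpos : 0 < P := by
    obtain ⟨c, hc⟩ := Function.ne_iff.mp hv
    have hc' : v c ≠ 0 := by simpa using hc
    have h0 : 0 < (v c)^2 :=
      lt_of_le_of_ne (sq_nonneg _) (Ne.symm (pow_ne_zero 2 hc'))
    exact h0.trans_le (Finset.single_le_sum (fun i _ => sq_nonneg (v i)) (Finset.mem_univ c))
  have hτi : (0:ℝ) < τ⁻¹ := inv_pos.mpr hτ
  have hkey : μ * P ≤ 12 / τ * P := by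
    rw [div_eq_mul_inv]
    nlinarith [mul_le_mul_of_nonneg_left hbound hτi.le]
  exact le_of_mul_le_mul_right hkey hPpos
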